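/- For n ≥ 2 agents there is a call sequence of length 3n−4 after which, in the engaged-agents asynchronous ANY semantics, every agent is a super expert: a fixed agent a calls all other agents (n−1 calls), then calls them again in the same order except the last one (n−2 calls), and finally every other agent calls a (n−1 missed calls). -/

import Mathlib

variable {A : Type*}

/-- Effect of one call `c` on a secret relation `S`:
`S ∪ ({(x,y),(y,x)} ∘ S)` where `c = (x,y)`. -/
def gstep (S : Set (A × A)) (c : A × A) : Set (A × A) :=
  S ∪ {p | (p.1 = c.1 ∧ (c.2, p.2) ∈ S) ∨ (p.1 = c.2 ∧ (c.1, p.2) ∈ S)}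

/-- `S^σ`: the result of applying the call sequence `σ` to `S`. -/
def applyCalls (S : Set (A × A)) (σ : List (A × A)) : Set (A × A) :=
  σ.foldl gstep S

/-- `I^σ`: the secret relation generated by `σ` from the identity relation. -/
def secrets (σ : List (A × A)) : Set (A × A) :=
  applyCalls {p | p.1 = p.2} σ

/-- `I^σ_x`: the set of secrets agent `x` knows after `σ`. -/
def secretsOf (σ : List (A × A)) (x : A) : Set A :=
  {z | (x, z) ∈ secrets σ}

/-- `a` is a super expert at `σ` w.r.t. relation `R`: `a` knows `Exp_A`. -/
def SEx (R : A → List (A × A) → List (A × A) → Prop) (x : A)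
    (σ : List (A × A)) : Prop :=
  ∀ τ, R x σ τ → secrets τ = (Set.univ : Set (A × A))

/-- `Q` is closed under the clauses of the engaged-agents asynchronous
epistemic relation for protocol `P`, where the super-expert side conditions
refer to the relation `R` itself. -/
def EngagedClosed (P : A → A → List (A × A) → Prop)
    (R Q : A → List (A × A) → List (A × A) → Prop) : Prop :=
  (∀ a : A, Q a [] []) ∧
  (∀ a σ τ, Q a σ τ → Q a τ σ) ∧
  (∀ a σ τ ρ, Q a σ τ → Q a τ ρ → Q a σ ρ) ∧
  (∀ (a b c : A) σ τ, Q a σ τ → a ≠ b → a ≠ c →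
      ¬ SEx R b σ → P b c σ → Q a (σ ++ [(b, c)]) τ) ∧
  (∀ (a b : A) σ τ, Q a σ τ → secretsOf σ b = secretsOf τ b →
      ¬ SEx R a σ → P a b σ → ¬ SEx R a τ → P a b τ →
      (SEx R b σ ↔ SEx R b τ) →
      Q a (σ ++ [(a, b)]) (τ ++ [(a, b)])) ∧
  (∀ (a b : A) σ τ, Q a σ τ → secretsOf σ b = secretsOf τ b →
      ¬ SEx R b σ → P b a σ → ¬ SEx R b τ → P b a τ →
      (SEx R a σ ↔ SEx R a τ) →
      Q a (σ ++ [(b, a)]) (τ ++ [(b, a)]))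

/-- `R` is the engaged-agents asynchronous epistemic relation for protocol `P`:
the smallest symmetric transitive relation satisfying the clauses. -/
def IsEngagedRel (P : A → A → List (A × A) → Prop)
    (R : A → List (A × A) → List (A × A) → Prop) : Prop :=
  EngagedClosed P R R ∧
  ∀ Q, EngagedClosed P R Q → ∀ a σ τ, R a σ τ → Q a σ τ

lemma mem_gstep {S : Set (A × A)} {c p : A × A} :
    p ∈ gstep S c ↔ p ∈ S ∨ (p.1 = c.1 ∧ (c.2, p.2) ∈ S) ∨ (p.1 = c.2 ∧ (c.1, p.2) ∈ S) := by
  simp [gstep, Set.mem_union, Set.mem_setOf_eq]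

lemma subset_gstep (S : Set (A × A)) (c : A × A) : S ⊆ gstep S c :=
  fun _ hp => Or.inl hp

lemma applyCalls_append (S : Set (A × A)) (σ ρ : List (A × A)) :
    applyCalls S (σ ++ ρ) = applyCalls (applyCalls S σ) ρ :=
  List.foldl_append

lemma subset_applyCalls (S : Set (A × A)) (σ : List (A × A)) :
    S ⊆ applyCalls S σ := by
  induction σ generalizing S with
  | nil => exact fun _ h => h
  | cons c t ih => exact fun p hp => ih (gstep S c) (subset_gstep S c hp)

lemma secrets_append (σ ρ : List (A × A)) :
    secrets (σ ++ ρ) = applyCalls (secrets σ) ρ :=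
  applyCalls_append _ _ _

lemma secrets_mono (σ ρ : List (A × A)) : secrets σ ⊆ secrets (σ ++ ρ) := by
  rw [secrets_append]; exact subset_applyCalls _ _

lemma secrets_concat (σ : List (A × A)) (c : A × A) :
    secrets (σ ++ [c]) = gstep (secrets σ) c := by
  rw [secrets_append]; rfl

lemma diag_mem_secrets (σ : List (A × A)) (z : A) : (z, z) ∈ secrets σ :=
  subset_applyCalls _ _ rfl

lemma secrets_univ_mono {σ : List (A × A)} (h : secrets σ = Set.univ) (ρ : List (A × A)) :
    secrets (σ ++ ρ) = Set.univ :=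
  Set.eq_univ_of_univ_subset (h ▸ secrets_mono σ ρ)

lemma mem_secretsOf {σ : List (A × A)} {u z : A} :
    z ∈ secretsOf σ u ↔ (u, z) ∈ secrets σ := Iff.rfl

/-- Row of an agent not in the call is unchanged. -/
lemma secretsOf_concat_notin {σ : List (A × A)} {c : A × A} {u : A}
    (h1 : u ≠ c.1) (h2 : u ≠ c.2) : secretsOf (σ ++ [c]) u = secretsOf σ u := by
  ext z
  simp only [mem_secretsOf, secrets_concat, mem_gstep]
  constructor
  · rintro (h | ⟨h, _⟩ | ⟨h, _⟩)
    · exact h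
    · exact absurd h h1
    · exact absurd h h2
  · exact fun h => Or.inl h

/-- Row of an agent in the call becomes the union of the two rows. -/
lemma secretsOf_concat_in {σ : List (A × A)} {c : A × A} {u : A}
    (h : u = c.1 ∨ u = c.2) :
    secretsOf (σ ++ [c]) u = secretsOf σ c.1 ∪ secretsOf σ c.2 := by
  ext z
  simp only [mem_secretsOf, Set.mem_union, secrets_concat, mem_gstep]
  rcases h with h | h <;> subst h
  · constructor
    · rintro (h | ⟨_, h⟩ | ⟨h, h'⟩)
      · exact Or.inl h
      · exact Or.inr h
      · exact Or.inl h'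
    · rintro (h | h)
      · exact Or.inl h
      · exact Or.inr (Or.inl ⟨rfl, h⟩)
  · constructor
    · rintro (h | ⟨h, h'⟩ | ⟨_, h⟩)
      · exact Or.inr h
      · exact Or.inr h'
      · exact Or.inl h
    · rintro (h | h)
      · exact Or.inr (Or.inr ⟨rfl, h⟩)
      · exact Or.inl h

open Classical in
/-- One step of the combined (actual secrets, forced secrets) fold for agent `x`:
when `x` takes part in the call, the rows of the two participants in the forced
relation are set to their actual values. -/
noncomputable def fstep (x : A) (p : Set (A × A) × Set (A × A)) (c : A × A) :
    Set (A × A) × Set (A × A) :=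
  (gstep p.1 c,
    if x = c.1 ∨ x = c.2 then
      {q | ((q.1 = c.1 ∨ q.1 = c.2) ∧ q ∈ gstep p.1 c) ∨
           (¬(q.1 = c.1 ∨ q.1 = c.2) ∧ q ∈ p.2)}
    else p.2)

/-- The pair (actual secrets, secrets forced from `x`'s view) after `σ`. -/
noncomputable def FS (x : A) (σ : List (A × A)) : Set (A × A) × Set (A × A) :=
  σ.foldl (fstep x) ({p | p.1 = p.2}, {p | p.1 = p.2})

lemma FS_fold_fst (x : A) (σ : List (A × A)) :
    ∀ S T : Set (A × A), (σ.foldl (fstep x) (S, T)).1 = applyCalls S σ := by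
  induction σ with
  | nil => intro S T; rfl
  | cons c t ih =>
      intro S T
      show (t.foldl (fstep x) (fstep x (S, T) c)).1 = applyCalls (gstep S c) t
      exact ih (gstep S c) (fstep x (S, T) c).2

lemma FS_fst (x : A) (σ : List (A × A)) : (FS x σ).1 = secrets σ :=
  FS_fold_fst x σ _ _

lemma FS_fold_snd_subset (x : A) (σ : List (A × A)) :
    ∀ S T : Set (A × A), T ⊆ S →
      (σ.foldl (fstep x) (S, T)).2 ⊆ (σ.foldl (fstep x) (S, T)).1 := by
  induction σ with
  | nil => intro S T h; exact h
  | cons c t ih =>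
      intro S T h
      show (t.foldl (fstep x) (fstep x (S, T) c)).2 ⊆ _
      have : fstep x (S, T) c = ((fstep x (S, T) c).1, (fstep x (S, T) c).2) := rfl
      rw [this]
      apply ih
      show (fstep x (S, T) c).2 ⊆ gstep S c
      unfold fstep
      dsimp only
      split
      · rintro q (⟨_, hq⟩ | ⟨_, hq⟩)
        · exact hq
        · exact subset_gstep S c (h hq)
      · exact fun q hq => subset_gstep S c (h hq)

lemma FS_snd_subset (x : A) (σ : List (A × A)) : (FS x σ).2 ⊆ secrets σ := by
  rw [← FS_fst x σ]
  exact FS_fold_snd_subset x σ _ _ (fun _ h => h)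

lemma FS_concat (x : A) (σ : List (A × A)) (c : A × A) :
    FS x (σ ++ [c]) = fstep x (FS x σ) c := by
  unfold FS
  rw [List.foldl_append]
  rfl

open Classical in
lemma FS_concat_snd (x : A) (σ : List (A × A)) (c : A × A) :
    (FS x (σ ++ [c])).2 =
      if x = c.1 ∨ x = c.2 then
        {q : A × A | ((q.1 = c.1 ∨ q.1 = c.2) ∧ q ∈ gstep (secrets σ) c) ∨
             (¬(q.1 = c.1 ∨ q.1 = c.2) ∧ q ∈ (FS x σ).2)}
      else (FS x σ).2 := by
  rw [FS_concat]
  unfold fstep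
  rw [FS_fst]

lemma FS_concat_notin {x : A} {c : A × A} (σ : List (A × A))
    (h1 : x ≠ c.1) (h2 : x ≠ c.2) : (FS x (σ ++ [c])).2 = (FS x σ).2 := by
  rw [FS_concat_snd, if_neg]
  rintro (h | h)
  · exact h1 h
  · exact h2 h

lemma mem_row_iff {σ τ : List (A × A)} {u : A}
    (h : secretsOf σ u = secretsOf τ u) (z : A) :
    (u, z) ∈ secrets σ ↔ (u, z) ∈ secrets τ := Set.ext_iff.mp h z

lemma mem_gstep_row_iff {σ τ : List (A × A)} {c : A × A}
    (h1 : secretsOf σ c.1 = secretsOf τ c.1) (h2 : secretsOf σ c.2 = secretsOf τ c.2) :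
    ∀ q : A × A, (q.1 = c.1 ∨ q.1 = c.2) →
      (q ∈ gstep (secrets σ) c ↔ q ∈ gstep (secrets τ) c) := by
  rintro ⟨u, z⟩ hu
  simp only [mem_gstep]
  have e1 := mem_row_iff h1 z
  have e2 := mem_row_iff h2 z
  rcases hu with hu | hu <;> subst hu <;> tauto

open Classical in
lemma FS_step_eq {x : A} {σ τ : List (A × A)} (c : A × A)
    (h1 : secretsOf σ c.1 = secretsOf τ c.1) (h2 : secretsOf σ c.2 = secretsOf τ c.2)
    (hF : (FS x σ).2 = (FS x τ).2) :
    (FS x (σ ++ [c])).2 = (FS x (τ ++ [c])).2 := by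
  rw [FS_concat_snd, FS_concat_snd, hF]
  split
  · ext q
    simp only [Set.mem_setOf_eq]
    by_cases hq : q.1 = c.1 ∨ q.1 = c.2
    · simp [hq, mem_gstep_row_iff h1 h2 q hq]
    · simp [hq]
  · rfl

lemma FS_row_univ_mono {x u : A} {σ : List (A × A)}
    (h : ∀ z, (u, z) ∈ (FS x σ).2) (c : A × A) :
    ∀ z, (u, z) ∈ (FS x (σ ++ [c])).2 := by
  intro z
  rw [FS_concat_snd]
  split
  · by_cases hu : u = c.1 ∨ u = c.2
    · exact Or.inl ⟨hu, subset_gstep _ _ (FS_snd_subset x σ (h z))⟩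
    · exact Or.inr ⟨hu, h z⟩
  · exact h z

lemma FS_row_univ_mono_list {x u : A} :
    ∀ (ρ σ : List (A × A)), (∀ z, (u, z) ∈ (FS x σ).2) →
      ∀ z, (u, z) ∈ (FS x (σ ++ ρ)).2 := by
  intro ρ
  induction ρ with
  | nil => intro σ h z; rw [List.append_nil]; exact h z
  | cons c t ih =>
      intro σ h z
      rw [List.append_cons]
      exact ih (σ ++ [c]) (FS_row_univ_mono h c) z

lemma FS_row_set {x u : A} {σ : List (A × A)} {c : A × A}
    (hx : x = c.1 ∨ x = c.2) (hu : u = c.1 ∨ u = c.2)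
    (h : ∀ z, (u, z) ∈ gstep (secrets σ) c) :
    ∀ z, (u, z) ∈ (FS x (σ ++ [c])).2 := by
  intro z
  rw [FS_concat_snd, if_pos hx]
  exact Or.inl ⟨hu, h z⟩

lemma FS_univ_mono {x : A} {σ : List (A × A)}
    (h : (FS x σ).2 = Set.univ) (ρ : List (A × A)) :
    (FS x (σ ++ ρ)).2 = Set.univ := by
  rw [Set.eq_univ_iff_forall]
  rintro ⟨u, z⟩
  refine FS_row_univ_mono_list ρ σ (fun z' => ?_) z
  rw [h]; trivial


/-- `x` has, at some point of `σ`, made a call that witnesses super-expertise: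
either a call to a super expert, or a call after which the whole relation is
forced to be full from `x`'s view. -/
noncomputable def Wp (R : A → List (A × A) → List (A × A) → Prop) (x : A)
    (σ : List (A × A)) : Prop :=
  ∃ σ' c ρ, σ = σ' ++ c :: ρ ∧ x = c.1 ∧
    (SEx R c.2 σ' ∨ (FS x (σ' ++ [c])).2 = Set.univ)

lemma Wp_nil {R : A → List (A × A) → List (A × A) → Prop} {x : A} :
    ¬ Wp R x [] := by
  rintro ⟨σ', c, ρ, h, -, -⟩
  simp at h

lemma Wp_concat {R : A → List (A × A) → List (A × A) → Prop} {x : A}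
    {σ : List (A × A)} {c : A × A} :
    Wp R x (σ ++ [c]) ↔
      Wp R x σ ∨ (x = c.1 ∧ (SEx R c.2 σ ∨ (FS x (σ ++ [c])).2 = Set.univ)) := by
  constructor
  · rintro ⟨σ', c', ρ, heq, hx, hcond⟩
    rcases ρ.eq_nil_or_concat with rfl | ⟨ρ', d, rfl⟩
    · obtain ⟨h1, h2⟩ := List.append_inj' heq rfl
      obtain rfl : c = c' := by simpa using h2
      subst h1
      exact Or.inr ⟨hx, hcond⟩
    · rw [List.concat_eq_append,
        show σ' ++ c' :: (ρ' ++ [d]) = (σ' ++ c' :: ρ') ++ [d] by simp] at heq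
      obtain ⟨h1, h2⟩ := List.append_inj' heq rfl
      subst h1
      exact Or.inl ⟨σ', c', ρ', rfl, hx, hcond⟩
  · rintro (⟨σ', c', ρ, heq, hx, hcond⟩ | ⟨hx, hcond⟩)
    · exact ⟨σ', c', ρ ++ [c], by rw [heq]; simp, hx, hcond⟩
    · exact ⟨σ, c, [], rfl, hx, hcond⟩

section Invariants
variable {R : A → List (A × A) → List (A × A) → Prop}

/-- Every sequence in the field of `R` is `R`-reflexive for every agent. -/
lemma refl_all (hR : IsEngagedRel (fun _ _ _ => True) R) :
    ∀ x σ τ, R x σ τ → (∀ b, R b σ σ) ∧ (∀ b, R b τ τ) := by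
  obtain ⟨⟨base, hsym, htrans, cl4, cl5, cl6⟩, hmin⟩ := hR
  have key := hmin
    (fun x σ τ => R x σ τ ∧ (∀ b, R b σ σ) ∧ (∀ b, R b τ τ)) ?_
  · exact fun x σ τ h => (key x σ τ h).2
  refine ⟨fun a => ⟨base a, fun b => base b, fun b => base b⟩, ?_, ?_, ?_, ?_, ?_⟩
  · rintro a σ τ ⟨h, h1, h2⟩; exact ⟨hsym a σ τ h, h2, h1⟩
  · rintro a σ τ ρ ⟨h, h1, _⟩ ⟨h', _, h2'⟩
    exact ⟨htrans a σ τ ρ h h', h1, h2'⟩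
  · -- clause 4
    rintro a b c σ τ ⟨h, h1, h2⟩ hab hac hnSE -
    refine ⟨cl4 a b c σ τ h hab hac hnSE trivial, ?_, h2⟩
    intro z
    by_cases hzb : z = b
    · subst hzb
      exact cl5 z c σ σ (h1 z) rfl hnSE trivial hnSE trivial Iff.rfl
    by_cases hzc : z = c
    · subst hzc
      exact cl6 z b σ σ (h1 z) rfl hnSE trivial hnSE trivial Iff.rfl
    · have s1 := cl4 z b c σ σ (h1 z) hzb hzc hnSE trivial
      exact cl4 z b c σ (σ ++ [(b, c)]) (hsym _ _ _ s1) hzb hzc hnSE trivial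
  · -- clause 5: call (a,b)
    rintro a b σ τ ⟨h, h1, h2⟩ hrow hnσ - hnτ - hiff
    have reflside : ∀ (ρ : List (A × A)), (∀ b', R b' ρ ρ) → ¬ SEx R a ρ →
        ∀ z, R z (ρ ++ [(a, b)]) (ρ ++ [(a, b)]) := by
      intro ρ hρ hn z
      by_cases hza : z = a
      · subst hza
        exact cl5 z b ρ ρ (hρ z) rfl hn trivial hn trivial Iff.rfl
      by_cases hzb : z = b
      · subst hzb
        exact cl6 z a ρ ρ (hρ z) rfl hn trivial hn trivial Iff.rfl
      · have s1 := cl4 z a b ρ ρ (hρ z) hza hzb hn trivial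
        exact cl4 z a b ρ (ρ ++ [(a, b)]) (hsym _ _ _ s1) hza hzb hn trivial
    exact ⟨cl5 a b σ τ h hrow hnσ trivial hnτ trivial hiff,
      reflside σ h1 hnσ, reflside τ h2 hnτ⟩
  · -- clause 6: call (b,a)
    rintro a b σ τ ⟨h, h1, h2⟩ hrow hnσ - hnτ - hiff
    have reflside : ∀ (ρ : List (A × A)), (∀ b', R b' ρ ρ) → ¬ SEx R b ρ →
        ∀ z, R z (ρ ++ [(b, a)]) (ρ ++ [(b, a)]) := by
      intro ρ hρ hn z
      by_cases hzb : z = b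
      · subst hzb
        exact cl5 z a ρ ρ (hρ z) rfl hn trivial hn trivial Iff.rfl
      by_cases hza : z = a
      · subst hza
        exact cl6 z b ρ ρ (hρ z) rfl hn trivial hn trivial Iff.rfl
      · have s1 := cl4 z b a ρ ρ (hρ z) hzb hza hn trivial
        exact cl4 z b a ρ (ρ ++ [(b, a)]) (hsym _ _ _ s1) hzb hza hn trivial
    exact ⟨cl6 a b σ τ h hrow hnσ trivial hnτ trivial hiff,
      reflside σ h1 hnσ, reflside τ h2 hnτ⟩

/-- Along `R`, an agent's own row and the forced relation are preserved. -/
lemma stage1 (hR : IsEngagedRel (fun _ _ _ => True) R) :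
    ∀ x σ τ, R x σ τ → secretsOf σ x = secretsOf τ x ∧ (FS x σ).2 = (FS x τ).2 := by
  obtain ⟨⟨base, hsym, htrans, cl4, cl5, cl6⟩, hmin⟩ := hR
  have key := hmin
    (fun x σ τ => R x σ τ ∧ secretsOf σ x = secretsOf τ x ∧ (FS x σ).2 = (FS x τ).2) ?_
  · exact fun x σ τ h => (key x σ τ h).2
  refine ⟨fun a => ⟨base a, rfl, rfl⟩, ?_, ?_, ?_, ?_, ?_⟩
  · rintro a σ τ ⟨h, e1, e2⟩; exact ⟨hsym _ _ _ h, e1.symm, e2.symm⟩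
  · rintro a σ τ ρ ⟨h, e1, e2⟩ ⟨h', e1', e2'⟩
    exact ⟨htrans _ _ _ _ h h', e1.trans e1', e2.trans e2'⟩
  · rintro a b c σ τ ⟨h, e1, e2⟩ hab hac hnSE -
    refine ⟨cl4 _ _ _ _ _ h hab hac hnSE trivial, ?_, ?_⟩
    · rw [secretsOf_concat_notin hab hac]; exact e1
    · rw [FS_concat_notin σ hab hac]; exact e2
  · rintro a b σ τ ⟨h, e1, e2⟩ hrow hnσ - hnτ - hiff
    refine ⟨cl5 _ _ _ _ h hrow hnσ trivial hnτ trivial hiff, ?_, ?_⟩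
    · rw [secretsOf_concat_in (Or.inl rfl), secretsOf_concat_in (Or.inl rfl)]
      show secretsOf σ a ∪ secretsOf σ b = secretsOf τ a ∪ secretsOf τ b
      rw [e1, hrow]
    · exact FS_step_eq (a, b) e1 hrow e2
  · rintro a b σ τ ⟨h, e1, e2⟩ hrow hnσ - hnτ - hiff
    refine ⟨cl6 _ _ _ _ h hrow hnσ trivial hnτ trivial hiff, ?_, ?_⟩
    · rw [secretsOf_concat_in (Or.inr rfl), secretsOf_concat_in (Or.inr rfl)]
      show secretsOf σ b ∪ secretsOf σ a = secretsOf τ b ∪ secretsOf τ a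
      rw [e1, hrow]
    · exact FS_step_eq (b, a) hrow e1 e2

lemma SEx_of_FS_univ (hR : IsEngagedRel (fun _ _ _ => True) R) {x : A}
    {σ : List (A × A)} (h : (FS x σ).2 = Set.univ) : SEx R x σ := by
  intro τ hτ
  obtain ⟨-, e2⟩ := stage1 hR x σ τ hτ
  exact Set.eq_univ_of_univ_subset (by rw [← h, e2]; exact FS_snd_subset x τ)

/-- Main invariant: witnessed super-expertise transfers along `R` and implies
that the secret relation is full on both sides. -/
lemma stage2 (hR : IsEngagedRel (fun _ _ _ => True) R) :
    ∀ x σ τ, R x σ τ → (Wp R x σ ↔ Wp R x τ) ∧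
      (Wp R x σ → secrets σ = Set.univ ∧ secrets τ = Set.univ) := by
  have hrefl := refl_all hR
  have hst1 := stage1 hR
  obtain ⟨⟨base, hsym, htrans, cl4, cl5, cl6⟩, hmin⟩ := hR
  have key := hmin
    (fun x σ τ => R x σ τ ∧ (Wp R x σ ↔ Wp R x τ) ∧
      (Wp R x σ → secrets σ = Set.univ ∧ secrets τ = Set.univ)) ?_
  · exact fun x σ τ h => (key x σ τ h).2
  refine ⟨fun a => ⟨base a, Iff.rfl, fun h => absurd h Wp_nil⟩, ?_, ?_, ?_, ?_, ?_⟩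
  · rintro a σ τ ⟨h, hw, hf⟩
    refine ⟨hsym _ _ _ h, hw.symm, fun hwτ => ?_⟩
    obtain ⟨u1, u2⟩ := hf (hw.mpr hwτ)
    exact ⟨u2, u1⟩
  · rintro a σ τ ρ ⟨h, hw, hf⟩ ⟨h', hw', hf'⟩
    exact ⟨htrans _ _ _ _ h h', hw.trans hw',
      fun hwσ => ⟨(hf hwσ).1, (hf' (hw.mp hwσ)).2⟩⟩
  · -- clause 4
    rintro a b c σ τ ⟨h, hw, hf⟩ hab hac hnSE -
    have hWnew : Wp R a (σ ++ [(b, c)]) ↔ Wp R a σ := by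
      rw [Wp_concat]
      constructor
      · rintro (h' | ⟨hab', -⟩)
        · exact h'
        · exact absurd hab' hab
      · exact Or.inl
    refine ⟨cl4 _ _ _ _ _ h hab hac hnSE trivial, hWnew.trans hw, fun hwnew => ?_⟩
    obtain ⟨u1, u2⟩ := hf (hWnew.mp hwnew)
    exact ⟨secrets_univ_mono u1 _, u2⟩
  · -- clause 5: call (a,b)
    rintro a b σ τ ⟨h, hw, hf⟩ hrow hnσ - hnτ - hiff
    obtain ⟨e1, e2⟩ := hst1 a σ τ h
    have hFeq : (FS a (σ ++ [(a, b)])).2 = (FS a (τ ++ [(a, b)])).2 :=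
      FS_step_eq (a, b) e1 hrow e2
    have hr := hrefl a σ τ h
    refine ⟨cl5 _ _ _ _ h hrow hnσ trivial hnτ trivial hiff, ?_, ?_⟩
    · rw [Wp_concat, Wp_concat]
      constructor
      · rintro (h' | ⟨hx, h' | h'⟩)
        · exact Or.inl (hw.mp h')
        · exact Or.inr ⟨hx, Or.inl (hiff.mp h')⟩
        · exact Or.inr ⟨hx, Or.inr (hFeq ▸ h')⟩
      · rintro (h' | ⟨hx, h' | h'⟩)
        · exact Or.inl (hw.mpr h')
        · exact Or.inr ⟨hx, Or.inl (hiff.mpr h')⟩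
        · exact Or.inr ⟨hx, Or.inr (hFeq ▸ h')⟩
    · rw [Wp_concat]
      rintro (h' | ⟨-, h' | h'⟩)
      · obtain ⟨u1, u2⟩ := hf h'
        exact ⟨secrets_univ_mono u1 _, secrets_univ_mono u2 _⟩
      · have u1 : secrets σ = Set.univ := h' σ (hr.1 b)
        have u2 : secrets τ = Set.univ := (hiff.mp h') τ (hr.2 b)
        exact ⟨secrets_univ_mono u1 _, secrets_univ_mono u2 _⟩
      · refine ⟨Set.eq_univ_of_univ_subset ?_, Set.eq_univ_of_univ_subset ?_⟩
        · rw [← h']; exact FS_snd_subset _ _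
        · have h2 : (FS a (τ ++ [(a, b)])).2 = Set.univ := hFeq ▸ h'
          rw [← h2]; exact FS_snd_subset _ _
  · -- clause 6: call (b,a)
    rintro a b σ τ ⟨h, hw, hf⟩ hrow hnσ - hnτ - hiff
    obtain ⟨e1, e2⟩ := hst1 a σ τ h
    have hFeq : (FS a (σ ++ [(b, a)])).2 = (FS a (τ ++ [(b, a)])).2 :=
      FS_step_eq (b, a) hrow e1 e2
    refine ⟨cl6 _ _ _ _ h hrow hnσ trivial hnτ trivial hiff, ?_, ?_⟩
    · rw [Wp_concat, Wp_concat]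
      constructor
      · rintro (h' | ⟨hx, h' | h'⟩)
        · exact Or.inl (hw.mp h')
        · have hab : a = b := hx
          exact absurd (hab ▸ h') hnσ
        · exact Or.inr ⟨hx, Or.inr (hFeq ▸ h')⟩
      · rintro (h' | ⟨hx, h' | h'⟩)
        · exact Or.inl (hw.mpr h')
        · have hab : a = b := hx
          exact absurd (hab ▸ h') hnτ
        · exact Or.inr ⟨hx, Or.inr (hFeq ▸ h')⟩
    · rw [Wp_concat]
      rintro (h' | ⟨hx, h' | h'⟩)
      · obtain ⟨u1, u2⟩ := hf h'
        exact ⟨secrets_univ_mono u1 _, secrets_univ_mono u2 _⟩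
      · have hab : a = b := hx
        exact absurd (hab ▸ h') hnσ
      · refine ⟨Set.eq_univ_of_univ_subset ?_, Set.eq_univ_of_univ_subset ?_⟩
        · rw [← h']; exact FS_snd_subset _ _
        · have h2 : (FS a (τ ++ [(b, a)])).2 = Set.univ := hFeq ▸ h'
          rw [← h2]; exact FS_snd_subset _ _

end Invariants

/-- After agent `a` calls everybody in `m`, `a`'s row contains all of `m`. -/
lemma caller_row (a : A) (m : List A) :
    ∀ (S : Set (A × A)), (∀ z, (z, z) ∈ S) →
      ∀ z, (z ∈ m ∨ (a, z) ∈ S) →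
        (a, z) ∈ applyCalls S (m.map (fun b => (a, b))) := by
  induction m with
  | nil =>
      rintro S hd z (h | h)
      · simp at h
      · exact h
  | cons b t ih =>
      intro S hd z hz
      show (a, z) ∈ applyCalls (gstep S (a, b)) (t.map _)
      apply ih (gstep S (a, b)) (fun z => subset_gstep _ _ (hd z))
      rcases hz with h | h
      · rcases List.mem_cons.mp h with rfl | h
        · exact Or.inr (mem_gstep.mpr (Or.inr (Or.inl ⟨rfl, hd z⟩)))
        · exact Or.inl h
      · exact Or.inr (subset_gstep _ _ h)


/-- For `n ≥ 2` agents there is a call sequence of length `3n - 4` after which,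
in the engaged-agents asynchronous ANY semantics, every agent is a super
expert. -/
theorem engaged_any_super_success [Fintype A]
    (hn : 2 ≤ Fintype.card A)
    (R : A → List (A × A) → List (A × A) → Prop)
    (hR : IsEngagedRel (fun _ _ _ => True) R) :
    ∃ σ : List (A × A), σ.length = 3 * Fintype.card A - 4 ∧
      ∀ x : A, SEx R x σ := by
  classical
  have hne : Nonempty A := Fintype.card_pos_iff.mp (by omega)
  obtain ⟨a⟩ := hne
  set l : List A := (Finset.univ.erase a).toList with hl
  have hmem : ∀ z : A, z ≠ a → z ∈ l := by
    intro z hz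
    rw [hl, Finset.mem_toList, Finset.mem_erase]
    exact ⟨hz, Finset.mem_univ z⟩
  have hlen : l.length = Fintype.card A - 1 := by
    rw [hl, Finset.length_toList, Finset.card_erase_of_mem (Finset.mem_univ a),
      Finset.card_univ]
  have hlne : l ≠ [] := by
    intro h
    rw [h] at hlen
    simp at hlen
    omega
  obtain ⟨l', bm, hlb⟩ : ∃ l' bm, l = l' ++ [bm] := by
    rcases l.eq_nil_or_concat with h | ⟨l', bm, h⟩
    · exact absurd h hlne
    · exact ⟨l', bm, by rw [h, List.concat_eq_append]⟩
  have cover : ∀ z : A, z = a ∨ z ∈ l' ∨ z = bm := by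
    intro z
    by_cases hz : z = a
    · exact Or.inl hz
    · have := hmem z hz
      rw [hlb, List.mem_append, List.mem_singleton] at this
      exact Or.inr this
  set f : A → A × A := fun b => (a, b) with hf
  set g : A → A × A := fun b => (b, a) with hg
  set ph1 : List (A × A) := (l' ++ [bm]).map f with hph1
  set ph2 : List (A × A) := l'.map f with hph2
  set ph3 : List (A × A) := (l' ++ [bm]).map g with hph3
  set σ₂ : List (A × A) := ph1 ++ ph2 with hσ₂
  set σs : List (A × A) := σ₂ ++ ph3 with hσs
  -- the full row of `a` after phase 1
  have rowa_ph1 : ∀ z : A, (a, z) ∈ secrets ph1 := by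
    intro z
    refine caller_row a (l' ++ [bm]) {p : A × A | p.1 = p.2} (fun _ => rfl) z ?_
    rcases cover z with hz | hz | hz
    · exact Or.inr hz.symm
    · exact Or.inl (List.mem_append_left _ hz)
    · exact Or.inl (List.mem_append_right _ (List.mem_singleton.mpr hz))
  -- forced row of `bm` is full after phase 1
  have rowbm : ∀ z : A, (bm, z) ∈ (FS a ph1).2 := by
    have h1 : ph1 = l'.map f ++ [(a, bm)] := by
      rw [hph1, List.map_append]; rfl
    rw [h1]
    refine FS_row_set (x := a) (σ := l'.map f) (c := (a, bm))
      (Or.inl rfl) (Or.inr rfl) ?_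
    intro z
    rcases cover z with hz | hz | hz
    · exact mem_gstep.mpr (Or.inr (Or.inr ⟨rfl, by
        rw [hz]; exact diag_mem_secrets _ a⟩))
    · refine mem_gstep.mpr (Or.inr (Or.inr ⟨rfl, ?_⟩))
      exact caller_row a l' {p : A × A | p.1 = p.2} (fun _ => rfl) z (Or.inl hz)
    · exact subset_gstep _ _ (by rw [hz]; exact diag_mem_secrets _ bm)
  have rowbm₂ : ∀ z : A, (bm, z) ∈ (FS a σ₂).2 :=
    FS_row_univ_mono_list ph2 ph1 rowbm
  -- forced rows of members of l' are full after phase 2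
  have rowl' : ∀ b ∈ l', ∀ z : A, (b, z) ∈ (FS a σ₂).2 := by
    intro b hb
    obtain ⟨u, v, huv⟩ := List.append_of_mem hb
    have h2 : σ₂ = ((ph1 ++ u.map f) ++ [(a, b)]) ++ v.map f := by
      rw [hσ₂, hph2, huv, List.map_append, List.map_cons]
      simp [List.append_assoc, hf]
    rw [h2]
    apply FS_row_univ_mono_list
    refine FS_row_set (x := a) (σ := ph1 ++ u.map f) (c := (a, b))
      (Or.inl rfl) (Or.inr rfl) ?_
    intro z
    refine mem_gstep.mpr (Or.inr (Or.inr ⟨rfl, ?_⟩))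
    exact secrets_mono ph1 _ (rowa_ph1 z)
  -- forced row of `a` is full after phase 1 + 2
  set L : List A := (l' ++ [bm]) ++ l' with hL
  have hσ₂L : σ₂ = L.map f := by rw [hσ₂, hL, List.map_append, hph1, hph2]
  have hLne : L ≠ [] := by rw [hL]; simp
  obtain ⟨M, w, hMw⟩ : ∃ M w, L = M ++ [w] := by
    rcases L.eq_nil_or_concat with h | ⟨M, w, h⟩
    · exact absurd h hLne
    · exact ⟨M, w, by rw [h, List.concat_eq_append]⟩
  have hσ₂M : σ₂ = M.map f ++ [(a, w)] := by
    rw [hσ₂L, hMw, List.map_append]; rfl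
  have rowa : ∀ z : A, (a, z) ∈ (FS a σ₂).2 := by
    rw [hσ₂M]
    refine FS_row_set (x := a) (σ := M.map f) (c := (a, w))
      (Or.inl rfl) (Or.inl rfl) ?_
    intro z
    have hzL : z = a ∨ z ∈ L := by
      rcases cover z with hz | hz | hz
      · exact Or.inl hz
      · exact Or.inr (by
          rw [hL]
          exact List.mem_append_left _ (List.mem_append_left _ hz))
      · exact Or.inr (by
          rw [hL]
          exact List.mem_append_left _ (List.mem_append_right _ (List.mem_singleton.mpr hz)))
    rcases hzL with hz | hz
    · rw [hz]; exact subset_gstep _ _ (diag_mem_secrets _ a)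
    · rw [hMw, List.mem_append, List.mem_singleton] at hz
      rcases hz with hz | hz
      · exact subset_gstep _ _
          (caller_row a M {p : A × A | p.1 = p.2} (fun _ => rfl) z (Or.inl hz))
      · exact mem_gstep.mpr (Or.inr (Or.inl ⟨rfl, by
          rw [hz]; exact diag_mem_secrets _ w⟩))
  -- forced relation is full after phase 1 + 2
  have hFuniv : (FS a σ₂).2 = Set.univ := by
    rw [Set.eq_univ_iff_forall]
    rintro ⟨u, z⟩
    rcases cover u with hu | hu | hu
    · rw [hu]; exact rowa z
    · exact rowl' u hu z
    · rw [hu]; exact rowbm₂ z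
  -- `a` is a super expert after phase 1 + 2 and any continuation
  have hSEa : ∀ ρ : List (A × A), SEx R a (σ₂ ++ ρ) := fun ρ =>
    SEx_of_FS_univ hR (FS_univ_mono hFuniv ρ)
  -- every agent has witnessed super-expertise after the full sequence
  have claim : ∀ x ∈ l' ++ [bm], Wp R x σs := by
    intro x hx'
    obtain ⟨u, v, huv⟩ := List.append_of_mem hx'
    refine ⟨σ₂ ++ u.map g, (x, a), v.map g, ?_, rfl, Or.inl (hSEa _)⟩
    rw [hσs, hph3, huv, List.map_append, List.map_cons]
    simp [List.append_assoc, hg]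
  have hWp : ∀ x : A, Wp R x σs := by
    intro x
    rcases cover x with hxa | hx | hxb
    · rw [hxa]
      refine ⟨M.map f, (a, w), ph3, ?_, rfl, Or.inr ?_⟩
      · rw [hσs, hσ₂M]; simp [List.append_assoc]
      · rw [← hσ₂M]; exact hFuniv
    · exact claim x (List.mem_append_left _ hx)
    · rw [hxb]
      exact claim bm (List.mem_append_right _ (List.mem_singleton.mpr rfl))
  refine ⟨σs, ?_, ?_⟩
  · have hlen' : l'.length + 1 = Fintype.card A - 1 := by
      rw [← hlen, hlb]; simp
    rw [hσs, hσ₂, hph1, hph2, hph3]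
    simp only [List.length_append, List.length_map, List.length_singleton]
    omega
  · intro x τ hτ
    exact ((stage2 hR x σs τ hτ).2 (hWp x)).2
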